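/- Let E be a finite-dimensional real normed space, let V and L be complementary linear subspaces of E, and suppose C > 0 satisfies C‖P_L g‖ ≤ dist(g, V) for every g ∈ E. For 0 < α < C/2 set c(α) := α/(C − α). Then B̄(0,1) ∩ V ⊆ P_V(B̄(0,1) ∩ C_V(α)) ⊆ B̄(0, 1/(1 − c(α))) ∩ V. -/

import Mathlib

open Metric Set

variable {E : Type*}

/-- The cone `C_V(α)` of all points whose distance from `V` is at most `α` times their norm. -/
def cone [NormedAddCommGroup E] [NormedSpace ℝ E] (V : Submodule ℝ E) (α : ℝ) : Set E :=
  {w : E | infDist w (V : Set E) ≤ α * ‖w‖}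

/-- The projection onto `P` along the complementary subspace `Q`, viewed as a map `E → E`. -/
noncomputable def splitProj [NormedAddCommGroup E] [NormedSpace ℝ E]
    (P Q : Submodule ℝ E) (hc : IsCompl P Q) (g : E) : E :=
  (P.linearProjOfIsCompl Q hc g : E)

theorem stmt14 [NormedAddCommGroup E] [NormedSpace ℝ E] [FiniteDimensional ℝ E]
    (V L : Submodule ℝ E) (hc : IsCompl V L) (C : ℝ) (hC : 0 < C)
    (hproj : ∀ g : E, C * ‖splitProj L V hc.symm g‖ ≤ infDist g (V : Set E))
    (α : ℝ) (hα0 : 0 < α) (hαC : α < C / 2) :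
    closedBall 0 1 ∩ (V : Set E) ⊆ splitProj V L hc '' (closedBall 0 1 ∩ cone V α) ∧
    splitProj V L hc '' (closedBall 0 1 ∩ cone V α) ⊆
      closedBall 0 (1 / (1 - α / (C - α))) ∩ (V : Set E) := by
  have hCα : α < C - α := by linarith
  have hc1 : α / (C - α) < 1 := (div_lt_one (by linarith)).2 hCα
  constructor
  · rintro v ⟨hv1, hvV⟩
    refine ⟨v, ⟨hv1, ?_⟩, ?_⟩
    · show infDist v (V : Set E) ≤ α * ‖v‖
      rw [infDist_zero_of_mem hvV]
      positivity
    · show (V.projectionOnto L hc v : E) = v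
      rw [show v = ((⟨v, hvV⟩ : V) : E) from rfl,
        Submodule.projectionOnto_apply_left]
  · rintro _ ⟨g, ⟨hg1, hgc⟩, rfl⟩
    have hsplit : splitProj V L hc g + splitProj L V hc.symm g = g :=
      Submodule.projection_add_projection_eq_self hc g
    set v := splitProj V L hc g with hv
    set l := splitProj L V hc.symm g with hl
    have hgn : ‖g‖ ≤ 1 := by simpa using hg1
    have h1 : C * ‖l‖ ≤ α * ‖g‖ := (hproj g).trans hgc
    have h2 : ‖g‖ ≤ ‖v‖ + ‖l‖ := by
      calc ‖g‖ = ‖v + l‖ := by rw [hsplit]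
      _ ≤ ‖v‖ + ‖l‖ := norm_add_le _ _
    have h3 : (C - α) * ‖l‖ ≤ α * ‖v‖ := by nlinarith
    have h4 : ‖l‖ ≤ α / (C - α) * ‖v‖ := by
      rw [div_mul_eq_mul_div, le_div_iff₀ (by linarith)]
      linarith [h3]
    have h5 : ‖v‖ ≤ ‖g‖ + ‖l‖ := by
      calc ‖v‖ = ‖g - l‖ := by rw [← hsplit]; congr 1; abel
      _ ≤ ‖g‖ + ‖l‖ := norm_sub_le _ _
    have h6 : (1 - α / (C - α)) * ‖v‖ ≤ 1 := by nlinarith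
    refine ⟨?_, (V.linearProjOfIsCompl L hc g).2⟩
    simp only [mem_closedBall, dist_zero_right]
    rw [le_div_iff₀ (by linarith)]
    linarith [h6]
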